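/- In Set, let T be the free F-algebra monad of a functor F, and let X be a T-algebra with structure map extending via (-)^♯. For any p : I → X and any context c ∈ T(I + X), the map [p, 1_{[p, id_X]^♯(c)}]^♯ : T(I + 1) → X equals [p, id_X]^♯ ∘ μ̂_X ∘ T(id_I + 1_c), where μ̂ is the multiplication of the monad T(I + (-)) and 1_c : 1 → T(I+X) picks out c. -/

import Mathlib

open CategoryTheory

universe u

/-- For the free `F`-algebra monad `T` on `Set`, a `T`-algebra `X`, `p : I → X` and a context
`c ∈ T(I + X)`, the extension `[p, 1_{[p, id_X]^♯(c)}]^♯ : T(I + 1) → X` equals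
`[p, id_X]^♯ ∘ μ̂_X ∘ T(id_I + 1_c)`, where `μ̂_X = μ_{I+X} ∘ T[η_{I+X} ∘ κ₁, id]` is the
multiplication of the monad `T(I + (-))`, and `f^♯ = a ∘ T f` for the algebra structure `a`. -/
theorem stmt9 (F : Type u ⥤ Type u) (T : CategoryTheory.Monad (Type u))
    (γ : ∀ X : Type u, F.obj (T.obj X) → T.obj X)
    (hγnat : ∀ (X Y : Type u) (f : X → Y) (b : F.obj (T.obj X)),
      γ Y (F.map (T.map (TypeCat.ofHom f)) b) = T.map (TypeCat.ofHom f) (γ X b))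
    (hfree : ∀ (X Z : Type u) (z : F.obj Z → Z) (f : X → Z),
      ∃! g : T.obj X → Z,
        (∀ a, g (T.η.app X a) = f a) ∧ (∀ b, g (γ X b) = z (F.map (TypeCat.ofHom g) b)))
    (X : T.Algebra) (I : Type u) (p : I → X.A)
    (c : T.obj (I ⊕ X.A)) :
    ∀ e : T.obj (I ⊕ PUnit.{u + 1}),
      X.a (T.map (TypeCat.ofHom (Sum.elim p fun _ => X.a (T.map (TypeCat.ofHom (Sum.elim p id)) c))) e) =
        X.a (T.map (TypeCat.ofHom (Sum.elim p id))
          (T.μ.app (I ⊕ X.A)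
            (T.map (TypeCat.ofHom (Sum.elim (fun i => T.η.app (I ⊕ X.A) (Sum.inl i)) id))
              (T.map (TypeCat.ofHom (Sum.map id fun _ : PUnit.{u + 1} => c)) e)))) := by
  intro e
  set g : I ⊕ X.A → X.A := Sum.elim p id with hg
  set u : I ⊕ T.obj (I ⊕ X.A) → T.obj (I ⊕ X.A) :=
    Sum.elim (fun i => T.η.app (I ⊕ X.A) (Sum.inl i)) id with hu
  set v : I ⊕ PUnit.{u + 1} → I ⊕ T.obj (I ⊕ X.A) :=
    Sum.map id (fun _ : PUnit.{u + 1} => c) with hv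
  -- combine the two maps
  have h1 : T.map (TypeCat.ofHom u) (T.map (TypeCat.ofHom v) e) = T.map (TypeCat.ofHom (u ∘ v)) e := by
    exact (FunctorToTypes.map_comp_apply T.toFunctor (TypeCat.ofHom v) (TypeCat.ofHom u) e).symm
  rw [h1]
  -- naturality of μ
  have h2 : T.map (TypeCat.ofHom g) (T.μ.app (I ⊕ X.A) (T.map (TypeCat.ofHom (u ∘ v)) e)) =
      T.μ.app X.A (T.map (T.map (TypeCat.ofHom g)) (T.map (TypeCat.ofHom (u ∘ v)) e)) := by
    exact (ConcreteCategory.congr_hom (T.μ.naturality (TypeCat.ofHom g)) (T.map (TypeCat.ofHom (u ∘ v)) e)).symm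
  rw [h2]
  -- algebra associativity
  have h3 : X.a (T.μ.app X.A (T.map (T.map (TypeCat.ofHom g)) (T.map (TypeCat.ofHom (u ∘ v)) e))) =
      X.a (T.map X.a (T.map (T.map (TypeCat.ofHom g)) (T.map (TypeCat.ofHom (u ∘ v)) e))) := by
    exact ConcreteCategory.congr_hom X.assoc (T.map (T.map (TypeCat.ofHom g)) (T.map (TypeCat.ofHom (u ∘ v)) e))
  rw [h3]
  -- combine maps again
  have h4 : T.map X.a (T.map (T.map (TypeCat.ofHom g)) (T.map (TypeCat.ofHom (u ∘ v)) e)) =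
      T.map (TypeCat.ofHom (fun y => X.a (T.map (TypeCat.ofHom g) (u (v y))))) e := by
    rw [← FunctorToTypes.map_comp_apply, ← FunctorToTypes.map_comp_apply]
    rfl
  rw [h4]
  -- the two generator maps agree
  have h5 : (fun y => X.a (T.map (TypeCat.ofHom g) (u (v y)))) =
      (Sum.elim p fun _ => X.a (T.map (TypeCat.ofHom g) c)) := by
    funext y
    cases y with
    | inl i =>
      have hnat : T.map (TypeCat.ofHom g) (T.η.app (I ⊕ X.A) (Sum.inl i)) = T.η.app X.A (g (Sum.inl i)) :=
        (ConcreteCategory.congr_hom (T.η.naturality (TypeCat.ofHom g)) (Sum.inl i : I ⊕ X.A)).symm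
      have hunit := ConcreteCategory.congr_hom X.unit (p i)
      simp at hunit
      show X.a (T.map (TypeCat.ofHom g) (T.η.app (I ⊕ X.A) (Sum.inl i))) = p i
      rw [hnat]
      exact hunit
    | inr t => simp [hu, hv]
  rw [h5]
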